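/- Let n ≥ 1, μ ∈ (0,1] and C₀, α ∈ (0,∞). Let Ω ⊂ ℝⁿ be open and let K : (0,∞)×Ω×Ω → ℂ satisfy, for all t ∈ (0,∞) and x, y, y₁, y₂ ∈ Ω: |K_t(x,y)| ≤ C₀ t^{-n/2} exp(−α‖x−y‖_∞²/t) and |K_t(x,y₁) − K_t(x,y₂)| ≤ C₀ t^{-n/2} (‖y₁−y₂‖_∞/√t)^μ. Let Q₀ = Q(x₀,r₀) be a cube with Q₀ ⊂ Ω and let b : ℝⁿ → ℂ be bounded measurable with supp b ⊂ Q₀ and ∫_{ℝⁿ} b(z) dz = 0. Then for every σ ∈ (0,μ) there exists C, depending only on n, μ, σ, C₀ and α, such that for every x ∈ Ω with ‖x−x₀‖_∞ ≥ 4r₀ and every y ∈ Ω and t ∈ (0,∞) with ‖x−y‖_∞ < t: |∫_Ω K_{t²}(y,z) b(z) dz| ≤ C (r₀^{n+σ}/‖x−x₀‖_∞^{n+σ}) ‖b‖_{L^∞}. -/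

import Mathlib

open MeasureTheory ENNReal

private lemma loglem {u N : ℝ} (hu : 0 < u) (hN : 0 < N) :
    -u ≤ N * Real.log N - N - N * Real.log u := by
  have h := Real.log_le_sub_one_of_pos (div_pos hu hN)
  rw [Real.log_div hu.ne' hN.ne'] at h
  have h2 := mul_le_mul_of_nonneg_left h hN.le
  have h3 : N * (u / N - 1) = u - N := by field_simp
  nlinarith [h2, h3]

private lemma core (n : ℕ) {μ σ C₀ α : ℝ} (hμ0 : 0 < μ) (hσ0 : 0 < σ) (hσμ : σ < μ)
    (hC₀ : 0 < C₀) (hα : 0 < α) :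
    ∃ A : ℝ, 0 < A ∧ ∀ D t r₀ a : ℝ, 0 < r₀ → 0 < t → 4 * r₀ ≤ D → 0 ≤ a →
      a ≤ C₀ * t ^ (-(n:ℝ)) * (r₀ / 2 / t) ^ μ →
      (t < D / 2 → a ≤ 2 * C₀ * t ^ (-(n:ℝ)) * Real.exp (-(α * (D / 4) ^ 2 / t ^ 2))) →
      a ≤ A * (r₀ ^ σ / D ^ ((n:ℝ) + σ)) := by
  have hθ0 : 0 < σ / μ := div_pos hσ0 hμ0
  have hθ1 : σ / μ < 1 := (div_lt_one hμ0).2 hσμ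
  have hθμ : σ / μ * μ = σ := div_mul_cancel₀ σ hμ0.ne'
  have hN0 : 0 < ((n:ℝ) + σ) / 2 := by positivity
  have h1θ : 0 < 1 - σ / μ := by linarith
  have hc₁0 : 0 < (1 - σ / μ) * α / 16 := by positivity
  refine ⟨Real.exp (Real.log C₀ + (1 - σ/μ) * Real.log 2 - σ * Real.log 2
      + ((n:ℝ)+σ)/2 * Real.log (((n:ℝ)+σ)/2) - ((n:ℝ)+σ)/2
      - ((n:ℝ)+σ)/2 * Real.log ((1 - σ/μ) * α / 16))
    + Real.exp (Real.log C₀ - μ * Real.log 2 + ((n:ℝ) + μ) * Real.log 2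
      - (μ - σ) * Real.log 4), by positivity, ?_⟩
  set E₀ : ℝ := Real.log C₀ + (1 - σ/μ) * Real.log 2 - σ * Real.log 2
      + ((n:ℝ)+σ)/2 * Real.log (((n:ℝ)+σ)/2) - ((n:ℝ)+σ)/2
      - ((n:ℝ)+σ)/2 * Real.log ((1 - σ/μ) * α / 16) with hE₀def
  set E₁ : ℝ := Real.log C₀ - μ * Real.log 2 + ((n:ℝ) + μ) * Real.log 2
      - (μ - σ) * Real.log 4 with hE₁def
  intro D t r₀ a hr₀ ht hD4 ha0 hH hG
  have hD0 : 0 < D := by linarith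
  have hRHS0 : 0 < (Real.exp E₀ + Real.exp E₁) * (r₀ ^ σ / D ^ ((n:ℝ)+σ)) := by positivity
  rcases ha0.eq_or_lt with h | ha
  · linarith [hRHS0]
  have hA0 : (0:ℝ) < Real.exp E₀ + Real.exp E₁ := by positivity
  have hlogA0 : E₀ ≤ Real.log (Real.exp E₀ + Real.exp E₁) := by
    rw [Real.le_log_iff_exp_le hA0]
    linarith [Real.exp_pos E₁]
  have hlogA1 : E₁ ≤ Real.log (Real.exp E₀ + Real.exp E₁) := by
    rw [Real.le_log_iff_exp_le hA0]
    linarith [Real.exp_pos E₀]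
  rw [← Real.log_le_log_iff ha hRHS0, Real.log_mul hA0.ne' (by positivity),
    Real.log_div (by positivity) (by positivity), Real.log_rpow hr₀, Real.log_rpow hD0]
  set LA := Real.log (Real.exp E₀ + Real.exp E₁) with hLA
  set Lt := Real.log t with hLt
  set Lr := Real.log r₀ with hLr
  set LD := Real.log D with hLD
  have hlogH : Real.log a ≤ Real.log C₀ + (-(n:ℝ)) * Lt + μ * (Lr - Real.log 2 - Lt) := by
    calc Real.log a ≤ Real.log (C₀ * t ^ (-(n:ℝ)) * (r₀ / 2 / t) ^ μ) := Real.log_le_log ha hH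
    _ = Real.log C₀ + (-(n:ℝ)) * Lt + μ * (Lr - Real.log 2 - Lt) := by
      rw [Real.log_mul (by positivity) (by positivity), Real.log_mul hC₀.ne' (by positivity),
        Real.log_rpow ht, Real.log_rpow (by positivity), Real.log_div (by positivity) ht.ne',
        Real.log_div hr₀.ne' two_ne_zero]
  rcases lt_or_ge t (D/2) with hcase | hcase
  · -- Gaussian case
    have hG' := hG hcase
    have hw0 : 0 < (1 - σ/μ) * (α * (D/4)^2 / t^2) := by positivity
    have hlogG : Real.log a ≤ Real.log 2 + Real.log C₀ + (-(n:ℝ)) * Lt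
        - α * (D/4)^2 / t^2 := by
      calc Real.log a ≤ Real.log (2 * C₀ * t ^ (-(n:ℝ)) * Real.exp (-(α * (D/4)^2 / t^2))) :=
            Real.log_le_log ha hG'
      _ = _ := by
        rw [Real.log_mul (by positivity) (Real.exp_pos _).ne',
          Real.log_mul (by positivity) (by positivity),
          Real.log_mul two_ne_zero hC₀.ne', Real.log_rpow ht, Real.log_exp]
        ring
    have hw := loglem hw0 hN0
    have hlogw : Real.log ((1 - σ/μ) * (α * (D/4)^2 / t^2))
        = Real.log ((1 - σ/μ) * α / 16) + 2*LD - 2*Lt := by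
      have hx : (1 - σ/μ) * (α * (D/4)^2 / t^2) = ((1 - σ/μ) * α / 16) * (D/t)^2 := by
        field_simp; ring
      rw [hx, Real.log_mul hc₁0.ne' (by positivity), Real.log_pow,
        Real.log_div hD0.ne' ht.ne']
      push_cast
      ring
    rw [hlogw] at hw
    have h1 := mul_le_mul_of_nonneg_left hlogH hθ0.le
    have h2 := mul_le_mul_of_nonneg_left hlogG h1θ.le
    have hμLr : σ/μ * (μ * Lr) = σ * Lr := by rw [← mul_assoc, hθμ]
    have hμLt : σ/μ * (μ * Lt) = σ * Lt := by rw [← mul_assoc, hθμ]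
    have hμl2 : σ/μ * (μ * Real.log 2) = σ * Real.log 2 := by rw [← mul_assoc, hθμ]
    have h3 : Real.log a ≤ Real.log C₀ + (1 - σ/μ) * Real.log 2 - σ * Real.log 2
        - (n:ℝ) * Lt + σ * Lr - σ * Lt - (1 - σ/μ) * (α * (D/4)^2 / t^2) := by
      linarith [h1, h2, hμLr, hμLt, hμl2]
    clear_value E₀ E₁ LA Lt Lr LD
    linarith [h3, hw, hlogA0, hE₀def]
  · -- Hölder case
    have hLtb : LD - Real.log 2 ≤ Lt := by
      have := Real.log_le_log (by positivity : (0:ℝ) < D/2) hcase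
      rwa [Real.log_div hD0.ne' two_ne_zero] at this
    have hLrb : Lr ≤ LD - Real.log 4 := by
      have := Real.log_le_log hr₀ (by linarith : r₀ ≤ D / 4)
      rwa [Real.log_div hD0.ne' (by norm_num : (4:ℝ) ≠ 0)] at this
    have p1 : ((n:ℝ)+μ) * (LD - Real.log 2) ≤ ((n:ℝ)+μ) * Lt :=
      mul_le_mul_of_nonneg_left hLtb (by positivity)
    have p2 : (μ-σ) * Lr ≤ (μ-σ) * (LD - Real.log 4) :=
      mul_le_mul_of_nonneg_left hLrb (by linarith)
    linarith [hlogH, p1, p2, hlogA1, hE₁def]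

/-- pointwise nontangential decay estimate for `e^{-t²L}b` when `b` is a bounded
function supported in a cube `Q₀ = Q(x₀,r₀) ⊂ Ω` (here `Q₀ = closedBall x₀ (r₀/2)` for the
sup-norm on `ℝⁿ = Fin n → ℝ`) with vanishing integral: for every `σ ∈ (0,μ)` there is `C`
(depending only on `n, μ, σ, C₀, α`) such that for all `x ∈ Ω` with `‖x−x₀‖_∞ ≥ 4r₀` and all
`(y,t)` with `y ∈ Ω`, `t > 0`, `‖x−y‖_∞ < t`:
`|∫_Ω K_{t²}(y,z) b(z) dz| ≤ C (r₀^{n+σ}/‖x−x₀‖_∞^{n+σ}) ‖b‖_{L^∞}`. -/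
theorem stmt15 (n : ℕ) (hn : 1 ≤ n) (μ : ℝ) (hμ : μ ∈ Set.Ioc (0:ℝ) 1)
    (C₀ α : ℝ) (hC₀ : 0 < C₀) (hα : 0 < α) (σ : ℝ) (hσ : σ ∈ Set.Ioo (0:ℝ) μ) :
    ∃ C : ℝ, 0 < C ∧
    ∀ (Ω : Set (Fin n → ℝ)), IsOpen Ω →
    ∀ K : ℝ → (Fin n → ℝ) → (Fin n → ℝ) → ℂ,
      (∀ t : ℝ, 0 < t → ∀ x ∈ Ω, ∀ y ∈ Ω,
        ‖K t x y‖ ≤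
          C₀ * t ^ (-(n : ℝ) / 2) * Real.exp (-(α * dist x y ^ 2 / t))) →
      (∀ t : ℝ, 0 < t → ∀ x ∈ Ω, ∀ y₁ ∈ Ω, ∀ y₂ ∈ Ω,
        ‖K t x y₁ - K t x y₂‖ ≤
          C₀ * t ^ (-(n : ℝ) / 2) * (dist y₁ y₂ / Real.sqrt t) ^ μ) →
    ∀ (x₀ : Fin n → ℝ) (r₀ : ℝ), 0 < r₀ → Metric.closedBall x₀ (r₀ / 2) ⊆ Ω →
    ∀ b : (Fin n → ℝ) → ℂ, Measurable b → eLpNorm b ⊤ volume ≠ ⊤ →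
      Function.support b ⊆ Metric.closedBall x₀ (r₀ / 2) →
      (∫ z, b z) = 0 →
    ∀ x ∈ Ω, 4 * r₀ ≤ dist x x₀ →
    ∀ y ∈ Ω, ∀ t : ℝ, 0 < t → dist x y < t →
      ‖∫ z in Ω, K (t ^ 2) y z * b z‖ ≤
        C * (r₀ ^ ((n : ℝ) + σ) / dist x x₀ ^ ((n : ℝ) + σ)) *
          (eLpNorm b ⊤ volume).toReal := by
  obtain ⟨hμ0, hμ1⟩ := hμ
  obtain ⟨hσ0, hσμ⟩ := hσ
  obtain ⟨A, hA0, hA⟩ := core n hμ0 hσ0 hσμ hC₀ hα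
  refine ⟨A, hA0, ?_⟩
  intro Ω hΩ K hK1 hK2 x₀ r₀ hr₀ hQΩ b hb hbT hsupp hbint x hx hxx₀ y hy t ht hxy
  have ht2 : (0:ℝ) < t^2 := by positivity
  have hx₀Ω : x₀ ∈ Ω := hQΩ (Metric.mem_closedBall_self (by positivity))
  set Q := Metric.closedBall x₀ (r₀/2) with hQ
  set D := dist x x₀ with hD
  have hD4 : 4 * r₀ ≤ D := hxx₀
  have hD0 : 0 < D := by linarith
  set Nb := (eLpNorm b ⊤ volume).toReal with hNbdef
  have hNb0 : 0 ≤ Nb := ENNReal.toReal_nonneg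
  have hbae : ∀ᵐ z, ‖b z‖ ≤ Nb := by
    filter_upwards [ae_le_eLpNormEssSup (f := b) (μ := volume)] with z hz
    have h2 : ((‖b z‖₊ : ℝ≥0∞)).toReal ≤ (eLpNormEssSup b volume).toReal :=
      ENNReal.toReal_mono (by rwa [eLpNorm_exponent_top] at hbT) hz
    simpa [hNbdef, eLpNorm_exponent_top] using h2
  have hpow : (t^2 : ℝ) ^ (-(n:ℝ)/2) = t ^ (-(n:ℝ)) := by
    rw [← Real.rpow_natCast t 2, ← Real.rpow_mul ht.le]
    congr 1
    ring
  have hsq : Real.sqrt (t^2) = t := Real.sqrt_sq ht.le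
  have hcont : ContinuousOn (fun z => K (t^2) y z) Ω := by
    intro z hz
    rw [Metric.continuousWithinAt_iff]
    intro ε hε
    have hL0 : 0 < C₀ * (t^2) ^ (-(n:ℝ)/2) / t ^ μ := by positivity
    set L := C₀ * (t^2) ^ (-(n:ℝ)/2) / t ^ μ with hL
    refine ⟨(ε/L) ^ (1/μ), by positivity, fun z' hz' hd => ?_⟩
    have h2 := hK2 (t^2) ht2 y hy z' hz' z hz
    rw [hsq] at h2
    rw [Complex.dist_eq]
    calc ‖K (t^2) y z' - K (t^2) y z‖
        ≤ C₀ * (t^2) ^ (-(n:ℝ)/2) * (dist z' z / t) ^ μ := h2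
      _ = L * (dist z' z) ^ μ := by
          rw [Real.div_rpow dist_nonneg ht.le, hL]; ring
      _ < L * (ε/L) := by
          apply mul_lt_mul_of_pos_left _ hL0
          have h3 : (dist z' z) ^ μ < ((ε/L) ^ (1/μ)) ^ μ :=
            Real.rpow_lt_rpow dist_nonneg hd hμ0
          rwa [← Real.rpow_mul (by positivity), one_div, inv_mul_cancel₀ hμ0.ne',
            Real.rpow_one] at h3
      _ = ε := by field_simp
  have hmeasK : AEStronglyMeasurable (fun z => K (t^2) y z) (volume.restrict Ω) :=
    hcont.aestronglyMeasurable hΩ.measurableSet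
  set c := K (t^2) y x₀ with hc
  set g : (Fin n → ℝ) → ℂ := fun z => (K (t^2) y z - c) * b z with hg
  have hsuppg : Function.support g ⊆ Q := by
    intro z hz
    apply hsupp
    simp only [Function.mem_support, hg] at hz ⊢
    intro hbz
    exact hz (by rw [hbz, mul_zero])
  have hQvol : volume Q = ENNReal.ofReal (r₀ ^ n) := by
    rw [hQ, Real.volume_pi_closedBall x₀ (by positivity)]
    have h2 : 2 * (r₀/2) = r₀ := by ring
    rw [Fintype.card_fin, h2]
  have hQfin : volume Q < ⊤ := by rw [hQvol]; exact ofReal_lt_top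
  have hQmeas : MeasurableSet Q := measurableSet_closedBall
  -- pointwise kernel bound on Q
  have hpt : ∀ z ∈ Q, ‖K (t^2) y z - c‖ ≤ A * (r₀ ^ σ / D ^ ((n:ℝ) + σ)) := by
    intro z hzQ
    have hzΩ : z ∈ Ω := hQΩ hzQ
    have hdzx₀ : dist z x₀ ≤ r₀ / 2 := Metric.mem_closedBall.1 hzQ
    refine hA D t r₀ _ hr₀ ht hD4 (norm_nonneg _) ?_ ?_
    · have h2 := hK2 (t^2) ht2 y hy z hzΩ x₀ hx₀Ω
      rw [hsq, hpow] at h2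
      refine h2.trans ?_
      gcongr
    · intro hcase
      have hd1 : dist x x₀ ≤ dist x y + dist y z + dist z x₀ := dist_triangle4 x y z x₀
      have hd2 : dist x x₀ ≤ dist x y + dist y x₀ := dist_triangle x y x₀
      have hyz : D / 4 ≤ dist y z := by linarith
      have hyx₀ : D / 4 ≤ dist y x₀ := by linarith
      have e1 := hK1 (t^2) ht2 y hy z hzΩ
      have e2 := hK1 (t^2) ht2 y hy x₀ hx₀Ω
      rw [hpow] at e1 e2
      have b1 : Real.exp (-(α * dist y z ^ 2 / t^2)) ≤ Real.exp (-(α * (D/4)^2 / t^2)) := by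
        apply Real.exp_le_exp.2
        apply neg_le_neg
        gcongr
      have b2 : Real.exp (-(α * dist y x₀ ^ 2 / t^2)) ≤ Real.exp (-(α * (D/4)^2 / t^2)) := by
        apply Real.exp_le_exp.2
        apply neg_le_neg
        gcongr
      have e1' : ‖K (t^2) y z‖ ≤ C₀ * t ^ (-(n:ℝ)) * Real.exp (-(α * (D/4)^2 / t^2)) := by
        exact e1.trans (mul_le_mul_of_nonneg_left b1 (by positivity))
      have e2' : ‖c‖ ≤ C₀ * t ^ (-(n:ℝ)) * Real.exp (-(α * (D/4)^2 / t^2)) := by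
        rw [hc]
        exact e2.trans (mul_le_mul_of_nonneg_left b2 (by positivity))
      calc ‖K (t^2) y z - c‖ ≤ ‖K (t^2) y z‖ + ‖c‖ := norm_sub_le _ _
        _ ≤ 2 * C₀ * t ^ (-(n:ℝ)) * Real.exp (-(α * (D/4)^2 / t^2)) := by
            rw [show (2:ℝ) * C₀ * t ^ (-(n:ℝ)) * Real.exp (-(α * (D/4)^2 / t^2))
              = C₀ * t ^ (-(n:ℝ)) * Real.exp (-(α * (D/4)^2 / t^2))
                + C₀ * t ^ (-(n:ℝ)) * Real.exp (-(α * (D/4)^2 / t^2)) from by ring]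
            exact add_le_add e1' e2'
  -- measurability / integrability
  have hmeasg : AEStronglyMeasurable g (volume.restrict Ω) :=
    (hmeasK.sub aestronglyMeasurable_const).mul (hb.aestronglyMeasurable.restrict)
  have hmeasgQ : AEStronglyMeasurable g (volume.restrict Q) :=
    hmeasg.mono_measure (Measure.restrict_mono hQΩ le_rfl)
  have hbndg : ∀ᵐ z ∂(volume.restrict Q), ‖g z‖ ≤ A * (r₀ ^ σ / D ^ ((n:ℝ)+σ)) * Nb := by
    filter_upwards [ae_restrict_mem hQmeas, ae_restrict_of_ae hbae] with z hzQ hbz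
    calc ‖g z‖ = ‖K (t^2) y z - c‖ * ‖b z‖ := norm_mul _ _
      _ ≤ A * (r₀ ^ σ / D ^ ((n:ℝ)+σ)) * Nb :=
          mul_le_mul (hpt z hzQ) hbz (norm_nonneg _) (by positivity)
  have hintgQ : IntegrableOn g Q :=
    ⟨hmeasgQ, HasFiniteIntegral.restrict_of_bounded _ hQfin hbndg⟩
  have hintg : Integrable g := (integrableOn_iff_integrable_of_support_subset hsuppg).1 hintgQ
  have hintb : Integrable b := by
    have h3 : IntegrableOn b Q :=
      ⟨hb.aestronglyMeasurable.restrict,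
        HasFiniteIntegral.restrict_of_bounded _ hQfin (ae_restrict_of_ae hbae)⟩
    exact (integrableOn_iff_integrable_of_support_subset hsupp).1 h3
  have hbΩ : ∫ z in Ω, b z = 0 := by
    rw [setIntegral_eq_integral_of_forall_compl_eq_zero
      (fun z hz => by
        by_contra hbz
        exact hz (hQΩ (hsupp (Function.mem_support.2 hbz)))), hbint]
  have eΩ : ∫ z in Ω, g z = ∫ z, g z :=
    setIntegral_eq_integral_of_forall_compl_eq_zero
      (fun z hz => by
        by_contra hgz
        exact hz (hQΩ (hsuppg (Function.mem_support.2 hgz))))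
  have eQ : ∫ z in Q, g z = ∫ z, g z :=
    setIntegral_eq_integral_of_forall_compl_eq_zero
      (fun z hz => by
        by_contra hgz
        exact hz (hsuppg (Function.mem_support.2 hgz)))
  have key : ∫ z in Ω, K (t^2) y z * b z = ∫ z in Q, g z := by
    have e : ∫ z in Ω, K (t^2) y z * b z = ∫ z in Ω, (g z + c * b z) := by
      apply integral_congr_ae
      filter_upwards with z
      rw [hg]
      ring
    rw [e, integral_add hintg.integrableOn ((hintb.const_mul c).integrableOn),
      integral_const_mul, hbΩ, mul_zero, add_zero, eΩ, ← eQ]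
  rw [key]
  calc ‖∫ z in Q, g z‖ ≤ (A * (r₀ ^ σ / D ^ ((n:ℝ)+σ)) * Nb) * (volume Q).toReal :=
      norm_setIntegral_le_of_norm_le_const_ae hQfin hbndg
    _ = A * (r₀ ^ ((n:ℝ)+σ) / D ^ ((n:ℝ)+σ)) * Nb := by
      rw [hQvol, ENNReal.toReal_ofReal (by positivity), Real.rpow_add hr₀,
        Real.rpow_natCast]
      ring
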